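/- arXiv:1203.6055 — 3 statements merged into one kernel-verified Lean document; each statement's English description precedes it below -/
import Mathlib

section
/- For all integers M, N, K (with y invertible), F_M(x,y)·F_N(x,y) − F_{M+K}(x,y)·F_{N−K}(x,y) = (−y)^{N−K} · F_{M+K−N}(x,y) · F_K(x,y). -/
/-- Bivariate Fibonacci polynomials. -/
def bF {K : Type*} [Field K] (x y : K) : ℕ → K
  | 0 => 0
  | 1 => 1
  | n + 2 => x * bF x y (n + 1) + y * bF x y n

/-- Bivariate Fibonacci polynomials extended to all integer indices:
F_{-n} = -(-y)^{-n} F_n. -/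
noncomputable def zF {K : Type*} [Field K] (x y : K) (n : ℤ) : K :=
  if 0 ≤ n then bF x y n.toNat else -((-y) ^ n) * bF x y (-n).toNat

section aux
variable {K : Type*} [Field K] (x y : K)

lemma zF_zero : zF x y 0 = 0 := by simp [zF, bF]

lemma zF_one : zF x y 1 = 1 := by simp [zF, bF]

lemma zF_neg_one : zF x y (-1) = y⁻¹ := by
  simp [zF, bF, inv_neg]

lemma bF_rec (m : ℕ) : bF x y (m + 2) = x * bF x y (m + 1) + y * bF x y m := rfl

lemma zF_rec (hy : y ≠ 0) (n : ℤ) :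
    zF x y (n + 2) = x * zF x y (n + 1) + y * zF x y n := by
  have hny : (-y) ≠ 0 := neg_ne_zero.mpr hy
  rcases le_or_gt 0 n with hn | hn
  · obtain ⟨m, rfl⟩ := Int.eq_ofNat_of_zero_le hn
    have h2 : ((m : ℤ) + 2).toNat = m + 2 := by omega
    have h1 : ((m : ℤ) + 1).toNat = m + 1 := by omega
    simp only [zF, if_pos (by omega : (0:ℤ) ≤ (m:ℤ) + 2),
      if_pos (by omega : (0:ℤ) ≤ (m:ℤ) + 1), if_pos (by omega : (0:ℤ) ≤ (m:ℤ)),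
      h1, h2, Int.toNat_natCast]
    exact bF_rec x y m
  · rcases eq_or_lt_of_le (by omega : n ≤ -1) with h | h
    · subst h
      norm_num [zF, bF, hy, inv_neg]
    rcases eq_or_lt_of_le (by omega : n ≤ -2) with h | h
    · subst h
      rw [show (-2 : ℤ) + 2 = 0 by ring, show (-2 : ℤ) + 1 = -1 by ring,
        zF_zero, zF_neg_one]
      have h2 : zF x y (-2) = -(x / y ^ 2) := by
        simp only [zF, if_neg (by omega : ¬ (0:ℤ) ≤ -2)]
        rw [show (-2 : ℤ) = -((2:ℕ) : ℤ) by norm_num, zpow_neg, zpow_natCast,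
          show ((-y) : K) ^ (2:ℕ) = y ^ 2 by ring]
        norm_num [bF, show Int.toNat 2 = 2 from rfl]
        ring
      rw [h2]
      field_simp
      ring
    · obtain ⟨m, hm⟩ : ∃ m : ℕ, n = -((m : ℤ) + 3) := ⟨(-n - 3).toNat, by omega⟩
      subst hm
      rw [show -((m : ℤ) + 3) + 2 = -((m : ℤ) + 1) by ring,
        show -((m : ℤ) + 3) + 1 = -((m : ℤ) + 2) by ring]
      simp only [zF, if_neg (by omega : ¬ (0:ℤ) ≤ -((m:ℤ)+1)),
        if_neg (by omega : ¬ (0:ℤ) ≤ -((m:ℤ)+2)), if_neg (by omega : ¬ (0:ℤ) ≤ -((m:ℤ)+3)),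
        neg_neg]
      have t1 : ((m : ℤ) + 1).toNat = m + 1 := by omega
      have t2 : ((m : ℤ) + 2).toNat = m + 2 := by omega
      have t3 : ((m : ℤ) + 3).toNat = m + 3 := by omega
      rw [t1, t2, t3]
      have hb : bF x y (m + 3) = x * bF x y (m + 2) + y * bF x y (m + 1) := bF_rec x y (m+1)
      rw [show -((m:ℤ)+1) = -(((m+1 : ℕ) : ℤ)) by push_cast; ring,
        show -((m:ℤ)+2) = -(((m+2 : ℕ) : ℤ)) by push_cast; ring,
        show -((m:ℤ)+3) = -(((m+3 : ℕ) : ℤ)) by push_cast; ring,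
        zpow_neg, zpow_neg, zpow_neg, zpow_natCast, zpow_natCast, zpow_natCast]
      have hp : ∀ j : ℕ, (-y) ^ j ≠ 0 := fun j => pow_ne_zero j hny
      rw [hb]
      field_simp
      ring

lemma int_rec1 (P : ℤ → Prop) (h0 : P 0) (hup : ∀ n : ℤ, P n → P (n + 1))
    (hdown : ∀ n : ℤ, P (n + 1) → P n) : ∀ n, P n := by
  intro n
  induction n using Int.induction_on with
  | zero => exact h0
  | succ k ih => exact hup k ih
  | pred k ih =>
    have := hdown (-(k : ℤ) - 1) (by simpa using ih)
    simpa using this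

lemma int_rec2 (P : ℤ → Prop) (h0 : P 0) (h1 : P 1)
    (hup : ∀ n : ℤ, P n → P (n + 1) → P (n + 2))
    (hdown : ∀ n : ℤ, P (n + 1) → P (n + 2) → P n) : ∀ n, P n := by
  have key : ∀ n, P n ∧ P (n + 1) := by
    apply int_rec1
    · exact ⟨h0, h1⟩
    · rintro n ⟨hn, hn1⟩
      exact ⟨hn1, by rw [show n + 1 + 1 = n + 2 by ring]; exact hup n hn hn1⟩
    · rintro n ⟨hn1, hn2⟩
      exact ⟨hdown n hn1 (by rwa [show n + 1 + 1 = n + 2 by ring] at hn2), hn1⟩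
  exact fun n => (key n).1

lemma zF_add (hy : y ≠ 0) (m n : ℤ) :
    zF x y (m + n) = zF x y (m + 1) * zF x y n + y * zF x y m * zF x y (n - 1) := by
  induction n using int_rec2 with
  | h0 =>
    rw [add_zero, zF_zero, show (0:ℤ) - 1 = -1 by ring, zF_neg_one]
    field_simp; ring
  | h1 =>
    rw [zF_one, show (1:ℤ) - 1 = 0 by ring, zF_zero]
    ring
  | hup n ih1 ih2 =>
    have r1 := zF_rec x y hy (m + n)
    have rn := zF_rec x y hy n
    have rn' := zF_rec x y hy (n - 1)
    rw [show n - 1 + 2 = n + 1 by ring, show n - 1 + 1 = n by ring] at rn'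
    rw [show m + (n + 1) = m + n + 1 by ring, show n + 1 - 1 = n by ring] at ih2
    rw [show m + (n + 2) = m + n + 2 by ring, show n + 2 - 1 = n + 1 by ring]
    linear_combination r1 + x * ih2 + y * ih1 - zF x y (m+1) * rn - (y * zF x y m) * rn'
  | hdown n ih1 ih2 =>
    apply mul_left_cancel₀ hy
    have r1 := zF_rec x y hy (m + n)
    have rn := zF_rec x y hy n
    have rn' := zF_rec x y hy (n - 1)
    rw [show m + n + 2 = m + (n + 2) by ring] at r1
    rw [show n - 1 + 2 = n + 1 by ring, show n - 1 + 1 = n by ring] at rn'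
    rw [show m + (n + 1) = m + n + 1 by ring, show n + 1 - 1 = n by ring] at ih1
    rw [show m + (n + 2) = m + n + 2 by ring, show n + 2 - 1 = n + 1 by ring] at ih2
    rw [show m + n + 2 = m + (n + 2) by ring] at ih2
    linear_combination -r1 + ih2 - x * ih1 + zF x y (m+1) * rn + (y * zF x y m) * rn'

lemma zF_cassini (hy : y ≠ 0) (n : ℤ) :
    zF x y (n + 1) * zF x y (n - 1) - zF x y n ^ 2 = -(-y) ^ (n - 1) := by
  have hny : (-y) ≠ 0 := neg_ne_zero.mpr hy
  induction n using int_rec1 with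
  | h0 =>
    rw [zero_add, zF_one, show (0:ℤ) - 1 = -1 by ring, zF_neg_one, zF_zero,
      zpow_neg, zpow_one]
    field_simp; ring
  | hup n ih =>
    have r := zF_rec x y hy n
    have r' := zF_rec x y hy (n - 1)
    rw [show n - 1 + 2 = n + 1 by ring, show n - 1 + 1 = n by ring] at r'
    have hp : (-y) ^ n = (-y) ^ (n - 1) * (-y) := by
      rw [← zpow_add_one₀ hny, sub_add_cancel]
    rw [show n + 1 + 1 = n + 2 by ring, show n + 1 - 1 = n by ring, r]
    linear_combination (-(zF x y (n+1))) * r' + (-y) * ih + hp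
  | hdown n ih =>
    have r := zF_rec x y hy n
    have r' := zF_rec x y hy (n - 1)
    rw [show n - 1 + 2 = n + 1 by ring, show n - 1 + 1 = n by ring] at r'
    have hp : (-y) ^ n = (-y) ^ (n - 1) * (-y) := by
      rw [← zpow_add_one₀ hny, sub_add_cancel]
    rw [show n + 1 + 1 = n + 2 by ring, show n + 1 - 1 = n by ring] at ih
    apply mul_left_cancel₀ hy
    linear_combination (-(zF x y (n+1))) * r' + (zF x y n) * r - ih + hp

end aux

/-- F_M F_N − F_{M+K} F_{N−K} = (−y)^{N−K} F_{M+K−N} F_K. -/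
theorem fib_index_reduction_special {K : Type*} [Field K] (x y : K) (hy : y ≠ 0)
    (M N k : ℤ) :
    zF x y M * zF x y N - zF x y (M + k) * zF x y (N - k) =
      (-y) ^ (N - k) * zF x y (M + k - N) * zF x y k := by
  have hny : (-y) ≠ 0 := neg_ne_zero.mpr hy
  have key : ∀ d s : ℤ,
      zF x y (d + s) * zF x y (s + k) - zF x y (d + s + k) * zF x y s =
        (-y) ^ s * zF x y d * zF x y k := by
    intro d s
    have h1 := zF_add x y hy d s
    have h2 := zF_add x y hy s k
    have h3 := zF_add x y hy d (s + k)
    have h4 := zF_add x y hy (s - 1) k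
    rw [show d + (s + k) = d + s + k by ring, show s + k - 1 = s + k - 1 by ring] at h3
    rw [show s - 1 + k = s + k - 1 by ring, show s - 1 + 1 = s by ring] at h4
    have hc := zF_cassini x y hy s
    have hp : (-y) ^ s = (-y) ^ (s - 1) * (-y) := by
      rw [← zpow_add_one₀ hny, sub_add_cancel]
    linear_combination (zF x y (s + k)) * h1 - (zF x y s) * h3
      + (y * zF x y d * zF x y (s - 1)) * h2 - (y * zF x y d * zF x y s) * h4
      + (y * zF x y d * zF x y k) * hc - (zF x y d * zF x y k) * hp
  have := key (M + k - N) (N - k)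
  rw [show M + k - N + (N - k) + k = M + k by ring,
    show M + k - N + (N - k) = M by ring, show N - k + k = N by ring] at this
  exact this
end

section
/- For all s ≥ 1, t ≥ 0, i ≥ 0 and every integer m (with y invertible), Σ_{j=0}^{i} (−1)^{(sj+2(s+1))(j+1)/2} · C(t+1,j)_{F_s(x,y)} · L_{ts(i−j)+m}(x,y) · y^{sj(j−1)/2} = (−1)^{s+i+1+si(i+1)/2} · C(t,i)_{F_s(x,y)} · L_{m−is}(x,y) · y^{si(i+1)/2}, where C(t,i)_{F_s} = 0 when i > t. -/
/-- Bivariate Lucas polynomials. -/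
def bL {K : Type*} [Field K] (x y : K) : ℕ → K
  | 0 => 2
  | 1 => x
  | n + 2 => x * bL x y (n + 1) + y * bL x y n

/-- Bivariate Lucas polynomials extended to all integer indices. -/
noncomputable def zL {K : Type*} [Field K] (x y : K) (n : ℤ) : K :=
  if 0 ≤ n then bL x y n.toNat else (-y) ^ n * bL x y (-n).toNat

/-- The bivariate s-Fibopolynomial (equal to 0 when k > n, since F_0 = 0
appears in the numerator). -/
noncomputable def fibo {K : Type*} [Field K] (x y : K) (s n k : ℕ) : K :=
  (∏ i ∈ Finset.range k, bF x y (s * (n - i))) / ∏ i ∈ Finset.range k, bF x y (s * (i + 1))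

/-- The field ℚ(x,y) of rational functions in two variables. -/
noncomputable abbrev RF2 : Type := FractionRing (MvPolynomial (Fin 2) ℚ)

noncomputable def Xv : RF2 := algebraMap (MvPolynomial (Fin 2) ℚ) RF2 (MvPolynomial.X 0)
noncomputable def Yv : RF2 := algebraMap (MvPolynomial (Fin 2) ℚ) RF2 (MvPolynomial.X 1)

section GenField
variable {K : Type*} [Field K] (x y : K) (hy : y ≠ 0)

lemma twoStep (P : ℕ → Prop) (h0 : P 0) (h1 : P 1)
    (hstep : ∀ n, P n → P (n + 1) → P (n + 2)) : ∀ n, P n := by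
  have key : ∀ n, P n ∧ P (n + 1) := by
    intro n
    induction n with
    | zero => exact ⟨h0, h1⟩
    | succ k ih => exact ⟨ih.2, hstep k ih.1 ih.2⟩
  exact fun n => (key n).1

lemma zL_coe (n : ℕ) : zL x y (n : ℤ) = bL x y n := by
  simp [zL]

include hy in
lemma zL_rec (n : ℤ) : zL x y (n + 2) = x * zL x y (n + 1) + y * zL x y n := by
  have hny : (-y) ≠ 0 := neg_ne_zero.mpr hy
  rcases le_or_gt 0 n with h | h
  · have h1 : (0:ℤ) ≤ n + 1 := by omega
    have h2 : (0:ℤ) ≤ n + 2 := by omega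
    have e2 : (n + 2).toNat = n.toNat + 2 := by omega
    have e1 : (n + 1).toNat = n.toNat + 1 := by omega
    simp only [zL, if_pos h, if_pos h1, if_pos h2, e1, e2]
    rw [show bL x y (n.toNat + 2) = x * bL x y (n.toNat + 1) + y * bL x y n.toNat from rfl]
  · rcases eq_or_lt_of_le (by omega : n ≤ -1) with h1 | h1
    · subst_eqs
      norm_num [zL]
      rw [show bL x y 1 = x from rfl, show bL x y 0 = 2 from rfl]
      field_simp
      ring
    · rcases eq_or_lt_of_le (by omega : n ≤ -2) with h2 | h2
      · subst_eqs
        norm_num [zL]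
        rw [show Int.toNat 2 = 2 from rfl, show bL x y 0 = 2 from rfl,
          show bL x y 1 = x from rfl, show bL x y 2 = x * x + y * 2 from rfl]
        try rw [show ((-y)^(2:ℤ)) = y^2 by rw [show (2:ℤ) = ((2:ℕ):ℤ) from rfl, zpow_natCast]; ring]
        field_simp
        ring
      · -- n ≤ -3
        have hn : n + 2 < 0 := by omega
        have hn1 : n + 1 < 0 := by omega
        simp only [zL, if_neg (not_le.mpr hn), if_neg (not_le.mpr hn1), if_neg (not_le.mpr h)]
        have e2 : (-(n+2)).toNat + 2 = (-n).toNat := by omega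
        have e1 : (-(n+2)).toNat + 1 = (-(n+1)).toNat := by omega
        set p := (-(n+2)).toNat with hp
        rw [← e1, ← e2]
        rw [show bL x y (p + 2) = x * bL x y (p + 1) + y * bL x y p from rfl]
        rw [show (n:ℤ) + 2 = (n+1) + 1 by ring, zpow_add_one₀ hny, zpow_add_one₀ hny]
        ring
end GenField

section GenField2
variable {K : Type*} [Field K] (x y : K) (hy : y ≠ 0)

include hy in
lemma zL_rec' (n : ℤ) : zL x y n = x * zL x y (n - 1) + y * zL x y (n - 2) := by
  have h := zL_rec x y hy (n - 2)
  rw [show n - 2 + 2 = n by ring, show n - 2 + 1 = n - 1 by ring] at h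
  exact h

include hy in
lemma L1 : ∀ A : ℕ, ∀ m : ℤ,
    bF x y (A + 1) * zL x y m = bF x y A * zL x y (m + 1) + (-y) ^ A * zL x y (m - A) := by
  apply twoStep
  · intro m
    simp [show bF x y 1 = 1 from rfl, show bF x y 0 = 0 from rfl]
  · intro m
    have h := zL_rec' x y hy (m + 1)
    rw [show m + 1 - 1 = m by ring, show m + 1 - 2 = m - 1 by ring] at h
    rw [show bF x y 2 = x * bF x y 1 + y * bF x y 0 from rfl,
      show bF x y 1 = 1 from rfl, show bF x y 0 = 0 from rfl]
    push_cast
    linear_combination -h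
  · intro A ih0 ih1 m
    have h := zL_rec' x y hy (m - A)
    rw [show bF x y (A + 2 + 1) = x * bF x y (A + 2) + y * bF x y (A + 1) from rfl]
    have i1 := ih1 m
    have i0 := ih0 m
    push_cast at i1 i0 ⊢
    have hb : bF x y (A + 2) = x * bF x y (A + 1) + y * bF x y A := rfl
    ring_nf at i1 i0 h hb ⊢
    linear_combination x * i1 + y * i0 + y * (-y) ^ A * h - zL x y (1 + m) * hb

end GenField2

section GenField3
variable {K : Type*} [Field K] (x y : K) (hy : y ≠ 0)

include hy in
lemma L2 : ∀ B A : ℕ, ∀ m : ℤ,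
    bF x y (A + B) * zL x y m =
      bF x y A * zL x y (m + B) + (-y) ^ A * bF x y B * zL x y (m - A) := by
  apply twoStep
  · intro A m
    simp [show bF x y 0 = 0 from rfl]
  · intro A m
    have h := L1 x y hy A m
    push_cast at h ⊢
    simpa [show bF x y 1 = 1 from rfl] using h
  · intro B ih0 ih1 A m
    have i1 := ih1 A m
    have i0 := ih0 A m
    have hz := zL_rec x y hy (m + B)
    have hbs : bF x y (A + B + 2) = x * bF x y (A + B + 1) + y * bF x y (A + B) := rfl
    have hb2 : bF x y (B + 2) = x * bF x y (B + 1) + y * bF x y B := rfl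
    have hgoal : A + (B + 2) = A + B + 2 := by omega
    rw [hgoal]
    push_cast at i1 i0 ⊢
    ring_nf at i1 i0 hz hbs hb2 ⊢
    linear_combination x * i1 + y * i0 - bF x y A * hz - (-y) ^ A * zL x y (m - A) * hb2 +
      zL x y m * hbs

end GenField3

section FiboLemmas
variable {K : Type*} [Field K] (x y : K)

lemma fibo_zero (s n : ℕ) : fibo x y s n 0 = 1 := by simp [fibo]

lemma fibo_succ (s n k : ℕ) :
    fibo x y s n (k + 1) = fibo x y s n k * bF x y (s * (n - k)) / bF x y (s * (k + 1)) := by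
  rw [fibo, fibo, Finset.prod_range_succ, Finset.prod_range_succ, ← div_mul_div_comm,
    ← mul_div_assoc]

lemma fibo_top_succ (s n k : ℕ) :
    fibo x y s (n + 1) (k + 1) = fibo x y s n k * bF x y (s * (n + 1)) / bF x y (s * (k + 1)) := by
  rw [fibo, fibo, Finset.prod_range_succ' (fun j => bF x y (s * (n + 1 - j))) k,
    Finset.prod_range_succ, ← div_mul_div_comm, ← mul_div_assoc]
  simp [Nat.succ_sub_succ]

lemma fibo_eq_zero (s n k : ℕ) (h : n < k) : fibo x y s n k = 0 := by
  rw [fibo, Finset.prod_eq_zero (Finset.mem_range.mpr h)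
    (by rw [Nat.sub_self, mul_zero]; rfl), zero_div]

end FiboLemmas

noncomputable def bFp : ℕ → MvPolynomial (Fin 2) ℚ
  | 0 => 0
  | 1 => 1
  | n + 2 => MvPolynomial.X 0 * bFp (n + 1) + MvPolynomial.X 1 * bFp n

lemma bF_eq_algebraMap : ∀ n, bF Xv Yv n = algebraMap (MvPolynomial (Fin 2) ℚ) RF2 (bFp n) := by
  apply twoStep
  · simp [bF, bFp]
  · simp [bF, bFp]
  · intro n h0 h1
    rw [show bF Xv Yv (n + 2) = Xv * bF Xv Yv (n + 1) + Yv * bF Xv Yv n from rfl,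
      show bFp (n + 2) = MvPolynomial.X 0 * bFp (n + 1) + MvPolynomial.X 1 * bFp n from rfl,
      map_add, map_mul, map_mul, h0, h1, Xv, Yv]

lemma bFp_eval_pos : ∀ n, 0 ≤ MvPolynomial.eval (fun _ => (1:ℚ)) (bFp n) ∧
    0 < MvPolynomial.eval (fun _ => (1:ℚ)) (bFp (n + 1)) := by
  intro n
  induction n with
  | zero => simp [bFp]
  | succ k ih =>
    refine ⟨le_of_lt ih.2, ?_⟩
    rw [show bFp (k + 2) = MvPolynomial.X 0 * bFp (k + 1) + MvPolynomial.X 1 * bFp k from rfl]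
    simp only [map_add, map_mul, MvPolynomial.eval_X, one_mul]
    have := ih.1
    have := ih.2
    linarith

lemma bF_ne_zero (n : ℕ) (h : 1 ≤ n) : bF Xv Yv n ≠ 0 := by
  rw [bF_eq_algebraMap]
  intro hc
  rw [IsFractionRing.to_map_eq_zero_iff] at hc
  obtain ⟨n', rfl⟩ : ∃ n', n = n' + 1 := ⟨n - 1, by omega⟩
  have := (bFp_eval_pos n').2
  rw [hc] at this
  simp at this

lemma Yv_ne_zero : Yv ≠ 0 := by
  rw [Yv]
  intro hc
  rw [IsFractionRing.to_map_eq_zero_iff] at hc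
  have : (MvPolynomial.eval (fun _ => (1:ℚ))) (MvPolynomial.X (1 : Fin 2)) = 0 := by rw [hc]; simp
  simp at this

lemma neg_one_pow_congr_RF2 (a b : ℕ) (h : a % 2 = b % 2) : ((-1 : RF2) ^ a) = (-1) ^ b := by
  conv_lhs => rw [← Nat.div_add_mod a 2]
  conv_rhs => rw [← Nat.div_add_mod b 2]
  rw [pow_add, pow_add, pow_mul, pow_mul, h, neg_one_sq, one_pow, one_pow]

/-- Σ_{j=0}^{i} (−1)^{(sj+2(s+1))(j+1)/2} C(t+1,j)_{F_s} L_{ts(i−j)+m} y^{sj(j−1)/2}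
  = (−1)^{s+i+1+si(i+1)/2} C(t,i)_{F_s} L_{m−is} y^{si(i+1)/2}. -/
theorem fibopolynomial_lucas_alternating_sum (s t i : ℕ) (m : ℤ) (hs : 1 ≤ s) :
    (∑ j ∈ Finset.range (i + 1),
        (-1 : RF2) ^ (((s * j + 2 * (s + 1)) * (j + 1)) / 2) *
          fibo Xv Yv s (t + 1) j *
            zL Xv Yv ((t * s * (i - j) : ℕ) + m) * Yv ^ ((s * j * (j - 1)) / 2)) =
      (-1 : RF2) ^ (s + i + 1 + (s * i * (i + 1)) / 2) *
        fibo Xv Yv s t i * zL Xv Yv (m - (i * s : ℕ)) * Yv ^ ((s * i * (i + 1)) / 2) := by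
  induction i generalizing m with
  | zero =>
    rw [Finset.sum_range_one]
    norm_num [fibo_zero]
  | succ i ih =>
    rw [Finset.sum_range_succ]
    have hsum : (∑ j ∈ Finset.range (i + 1),
        (-1 : RF2) ^ (((s * j + 2 * (s + 1)) * (j + 1)) / 2) *
          fibo Xv Yv s (t + 1) j *
            zL Xv Yv ((t * s * (i + 1 - j) : ℕ) + m) * Yv ^ ((s * j * (j - 1)) / 2)) =
        (∑ j ∈ Finset.range (i + 1),
        (-1 : RF2) ^ (((s * j + 2 * (s + 1)) * (j + 1)) / 2) *
          fibo Xv Yv s (t + 1) j *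
            zL Xv Yv ((t * s * (i - j) : ℕ) + (m + (t * s : ℕ))) *
              Yv ^ ((s * j * (j - 1)) / 2)) := by
      refine Finset.sum_congr rfl fun j hj => ?_
      have hj' : j ≤ i := by simpa [Nat.lt_succ_iff] using Finset.mem_range.mp hj
      have h1 : t * s * (i + 1 - j) = t * s * (i - j) + t * s := by
        rw [show i + 1 - j = (i - j) + 1 by omega, Nat.mul_succ]
      rw [show ((t * s * (i + 1 - j) : ℕ) : ℤ) + m
          = ((t * s * (i - j) : ℕ) : ℤ) + (m + ((t * s : ℕ) : ℤ)) by rw [h1]; push_cast; ring]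
    rw [hsum, ih (m + (t * s : ℕ))]
    rcases le_or_gt i t with hit | hit
    · -- main case i ≤ t
      obtain ⟨k, hk⟩ : ∃ k, i * (i + 1) = k + k := Nat.even_mul_succ_self i
      have hk2 : (i + 1) * (i + 1 + 1) = (k + (i + 1)) * 2 := by
        have h : (i + 1) * (i + 1 + 1) = i * (i + 1) + 2 * (i + 1) := by ring
        rw [h, hk]; ring
      have d1 : s * i * (i + 1) / 2 = s * k := by
        have h : s * i * (i + 1) = (s * k) * 2 := by rw [mul_assoc, hk]; ring
        rw [h, Nat.mul_div_cancel _ two_pos]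
      have d2 : s * (i + 1) * (i + 1 + 1) / 2 = s * (k + (i + 1)) := by
        have h : s * (i + 1) * (i + 1 + 1) = (s * (k + (i + 1))) * 2 := by
          rw [mul_assoc, hk2]; ring
        rw [h, Nat.mul_div_cancel _ two_pos]
      have d3 : (s * (i + 1) + 2 * (s + 1)) * (i + 1 + 1) / 2
          = s * (k + (i + 1)) + (s + 1) * (i + 1 + 1) := by
        have h : (s * (i + 1) + 2 * (s + 1)) * (i + 1 + 1)
            = (s * (k + (i + 1)) + (s + 1) * (i + 1 + 1)) * 2 := by
          have h2 : s * ((i + 1) * (i + 1 + 1)) = s * ((k + (i + 1)) * 2) := by rw [hk2]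
          calc (s * (i + 1) + 2 * (s + 1)) * (i + 1 + 1)
              = s * ((i + 1) * (i + 1 + 1)) + (s + 1) * (i + 1 + 1) * 2 := by ring
            _ = s * ((k + (i + 1)) * 2) + (s + 1) * (i + 1 + 1) * 2 := by rw [h2]
            _ = _ := by ring
        rw [h, Nat.mul_div_cancel _ two_pos]
      have d4 : s * (i + 1) * (i + 1 - 1) / 2 = s * k := by
        have h : s * (i + 1) * (i + 1 - 1) = (s * k) * 2 := by
          rw [show i + 1 - 1 = i from rfl]
          calc s * (i + 1) * i = s * (i * (i + 1)) := by ring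
            _ = s * (k + k) := by rw [hk]
            _ = (s * k) * 2 := by ring
        rw [h, Nat.mul_div_cancel _ two_pos]
      have sg1 : (-1 : RF2) ^ (s * (k + (i + 1)) + (s + 1) * (i + 1 + 1))
          = -(-1 : RF2) ^ (s + i + 1 + s * k) := by
        rw [neg_one_pow_congr_RF2 (s * (k + (i + 1)) + (s + 1) * (i + 1 + 1))
          (s + i + 1 + s * k + 1)
          (by rw [show s * (k + (i + 1)) + (s + 1) * (i + 1 + 1)
                = (s + i + 1 + s * k + 1) + (s * i + s) * 2 by ring,
              Nat.add_mul_mod_self_right]), pow_succ]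
        ring
      have sg2 : (-1 : RF2) ^ (s + (i + 1) + 1 + s * (k + (i + 1)))
          = (-1 : RF2) ^ (s + i + 1 + s * k) * ((-1 : RF2) ^ (s * (i + 1)) * (-1)) := by
        rw [show s + (i + 1) + 1 + s * (k + (i + 1))
            = (s + i + 1 + s * k) + (s * (i + 1) + 1) by ring, pow_add, pow_succ]
      have yp : (Yv : RF2) ^ (s * (k + (i + 1))) = Yv ^ (s * k) * Yv ^ (s * (i + 1)) := by
        rw [← pow_add]; congr 1; ring
      have f1 := fibo_top_succ Xv Yv s t i
      have f2 := fibo_succ Xv Yv s t i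
      have core := L2 Xv Yv Yv_ne_zero (s * (t - i)) (s * (i + 1)) m
      rw [show s * (i + 1) + s * (t - i) = s * (t + 1) by
            rw [← Nat.mul_add, show i + 1 + (t - i) = t + 1 by omega],
          show m + ((s * (t - i) : ℕ) : ℤ) = m + ((t * s : ℕ) : ℤ) - ((i * s : ℕ) : ℤ) by
            rw [Nat.cast_mul, Nat.cast_sub hit]; push_cast; ring,
          show m - ((s * (i + 1) : ℕ) : ℤ) = m - (((i + 1) * s : ℕ) : ℤ) by
            push_cast; ring,
          neg_pow] at core
      have hzm : ((t * s * (i + 1 - (i + 1)) : ℕ) : ℤ) + m = m := by simp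
      have hD : bF Xv Yv (s * (i + 1)) ≠ 0 :=
        bF_ne_zero _ (Nat.one_le_iff_ne_zero.mpr (by positivity))
      rw [hzm, d1, d2, d3, d4, sg1, sg2, yp, f1, f2]
      set c := fibo Xv Yv s t i with hc
      set FT := bF Xv Yv (s * (t + 1)) with hFT
      set FB := bF Xv Yv (s * (t - i)) with hFB
      set D := bF Xv Yv (s * (i + 1)) with hDdef
      set z1 := zL Xv Yv (m + ((t * s : ℕ) : ℤ) - ((i * s : ℕ) : ℤ)) with hz1
      set z2 := zL Xv Yv m with hz2
      set z3 := zL Xv Yv (m - (((i + 1) * s : ℕ) : ℤ)) with hz3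
      set e1 := (-1 : RF2) ^ (s + i + 1 + s * k) with he1
      set e2 := (-1 : RF2) ^ (s * (i + 1)) with he2
      set w := (Yv : RF2) ^ (s * k) with hw
      set v := (Yv : RF2) ^ (s * (i + 1)) with hv
      field_simp
      linear_combination (-(e1 * c * w)) * core
    · -- degenerate case t < i
      rw [fibo_eq_zero Xv Yv s t i hit, fibo_eq_zero Xv Yv s t (i + 1) (by omega),
        fibo_eq_zero Xv Yv s (t + 1) (i + 1) (by omega)]
      ring
end

section
/- For all s ≥ 1 and n ≥ 0, F_{sn}(x,y)³ = F_s(x,y)³ · ( C(n+2,3)_{F_s} + 2(−y)^s L_s(x,y) · C(n+1,3)_{F_s} + (−y)^{3s} · C(n,3)_{F_s} ), where C(m,3)_{F_s} = F_{sm}F_{s(m−1)}F_{s(m−2)}/(F_s F_{2s} F_{3s}) for m ≥ 3 and 0 otherwise (all arguments (x,y)). -/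
section Aux

variable {K : Type*} [Field K] (x y : K)

@[simp] lemma bF_zero : bF x y 0 = 0 := rfl
@[simp] lemma bF_one : bF x y 1 = 1 := rfl
lemma bF_two_step (n : ℕ) : bF x y (n + 2) = x * bF x y (n + 1) + y * bF x y n := rfl
lemma bL_two_step (n : ℕ) : bL x y (n + 2) = x * bL x y (n + 1) + y * bL x y n := rfl

lemma bF_add (m n : ℕ) :
    bF x y (m + n + 1) = bF x y (m + 1) * bF x y (n + 1) + y * bF x y m * bF x y n := by
  induction n using Nat.twoStepInduction with
  | zero => simp
  | one => simp [bF_two_step, show m + 1 + 1 = m + 2 from rfl]; ring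
  | more n ih1 ih2 =>
    have e : m + (n + 2) + 1 = (m + n + 1) + 2 := by ring
    have e2 : m + (n + 1) + 1 = (m + n) + 2 := by ring
    rw [e, bF_two_step, ← e2, ih1, ih2, bF_two_step x y (n+1), bF_two_step x y n]
    ring

lemma bL_eq (n : ℕ) : bL x y (n + 1) = bF x y (n + 2) + y * bF x y n := by
  induction n using Nat.twoStepInduction with
  | zero => simp [bL, bF_two_step]
  | one => simp [bL_two_step, bL, bF_two_step]; ring
  | more n ih1 ih2 =>
    rw [show n + 2 + 1 = (n + 1) + 2 from rfl, bL_two_step, ih1, ih2,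
      bF_two_step x y (n+2), bF_two_step x y (n+1), bF_two_step x y n]
    ring

lemma bF_cassini (n : ℕ) :
    bF x y (n + 2) * bF x y n - bF x y (n + 1) ^ 2 = -(-y) ^ n := by
  induction n with
  | zero => simp [bF_two_step]
  | succ n ih =>
    rw [show n + 1 + 2 = (n + 1) + 2 from rfl, bF_two_step x y (n+1)]
    linear_combination (-y) * ih - bF x y (n+2) * bF_two_step x y n

lemma bF_key (s m : ℕ) (hs : 1 ≤ s) :
    bF x y (m + 2*s) + (-y)^s * bF x y m = bL x y s * bF x y (m + s) := by
  obtain ⟨t, rfl⟩ : ∃ t, s = t + 1 := ⟨s - 1, by omega⟩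
  rw [show m + 2*(t+1) = (m + t + 1) + t + 1 from by ring,
    show m + (t+1) = m + t + 1 from by ring]
  rw [bF_add x y (m + t + 1) t, bL_eq x y t]
  rw [show m + t + 1 + 1 = m + (t+1) + 1 from by ring, bF_add x y m (t+1),
    show t + 1 + 1 = t + 2 from by omega, bF_add x y m t]
  linear_combination (-y * bF x y m) * bF_cassini x y t

lemma bF_mul_rec (s k : ℕ) (hs : 1 ≤ s) :
    bF x y (s*(k+2)) = bL x y s * bF x y (s*(k+1)) - (-y)^s * bF x y (s*k) := by
  have h := bF_key x y s (s*k) hs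
  rw [show s*(k+2) = s*k + 2*s from by ring, show s*(k+1) = s*k + s from by ring]
  linear_combination h

lemma fibo_eq (s m : ℕ) : fibo x y s m 3 =
    bF x y (s*m) * bF x y (s*(m-1)) * bF x y (s*(m-2)) /
      (bF x y (s*1) * bF x y (s*2) * bF x y (s*3)) := by
  simp [fibo, Finset.prod_range_succ]

end Aux

lemma bFp_map (n : ℕ) :
    algebraMap (MvPolynomial (Fin 2) ℚ) RF2 (bFp n) = bF Xv Yv n := by
  induction n using Nat.twoStepInduction with
  | zero => simp [bFp]
  | one => simp [bFp]
  | more n ih1 ih2 =>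
    simp only [bFp, bF_two_step, map_add, map_mul, Xv, Yv, ih1, ih2]

lemma bFp_eval (n : ℕ) :
    MvPolynomial.eval (fun _ => (1:ℚ)) (bFp n) = Nat.fib n := by
  induction n using Nat.twoStepInduction with
  | zero => simp [bFp]
  | one => simp [bFp]
  | more n ih1 ih2 =>
    simp only [bFp, map_add, map_mul, MvPolynomial.eval_X, ih1, ih2, Nat.fib_add_two]
    push_cast
    ring

lemma bF_ne (n : ℕ) (hn : 1 ≤ n) : bF Xv Yv n ≠ 0 := by
  rw [← bFp_map]
  intro h
  have h0 : bFp n = 0 := by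
    apply IsFractionRing.injective (MvPolynomial (Fin 2) ℚ) RF2
    simpa using h
  have he := bFp_eval n
  rw [h0] at he
  simp only [map_zero] at he
  have hf : 0 < Nat.fib n := Nat.fib_pos.mpr hn
  exact absurd he.symm (by exact_mod_cast hf.ne')

/-- F_{sn}³ = F_s³ · ( C(n+2,3)_{F_s} + 2(−y)^s L_s C(n+1,3)_{F_s} + (−y)^{3s} C(n,3)_{F_s} ). -/
theorem fib_cube_as_fibopolynomials (s n : ℕ) (hs : 1 ≤ s) :
    bF Xv Yv (s * n) ^ 3 =
      bF Xv Yv s ^ 3 *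
        (fibo Xv Yv s (n + 2) 3 + 2 * (-Yv) ^ s * bL Xv Yv s * fibo Xv Yv s (n + 1) 3 +
          (-Yv) ^ (3 * s) * fibo Xv Yv s n 3) := by
  have hA : bF Xv Yv s ≠ 0 := bF_ne s (by omega)
  have hB : bF Xv Yv (s*2) ≠ 0 := bF_ne _ (by omega)
  have hC : bF Xv Yv (s*3) ≠ 0 := bF_ne _ (by omega)
  have d2 : bF Xv Yv (s*2) = bL Xv Yv s * bF Xv Yv s := by
    have := bF_mul_rec Xv Yv s 0 hs
    simpa using this
  have d3 : bF Xv Yv (s*3) = bL Xv Yv s * bF Xv Yv (s*2) - (-Yv)^s * bF Xv Yv s := by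
    have := bF_mul_rec Xv Yv s 1 hs
    simpa using this
  have hq : (-Yv) ^ (3*s) = ((-Yv)^s)^3 := by
    rw [show 3*s = s*3 from by ring, pow_mul]
  match n with
  | 0 =>
    simp [fibo_eq, hq, mul_zero]
  | 1 =>
    rw [show (1:ℕ) + 2 = 3 from rfl, show (1:ℕ) + 1 = 2 from rfl]
    rw [fibo_eq, fibo_eq, fibo_eq]
    simp only [show (3:ℕ)-1 = 2 from rfl, show (3:ℕ)-2 = 1 from rfl, show (2:ℕ)-1 = 1 from rfl,
      show (2:ℕ)-2 = 0 from rfl, show (1:ℕ)-1 = 0 from rfl, show (1:ℕ)-2 = 0 from rfl]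
    have z : bF Xv Yv (s*0) = 0 := by rw [Nat.mul_zero]; simp
    rw [z]
    simp only [mul_zero, zero_mul, zero_div, add_zero, mul_one]
    field_simp
  | (k+2) =>
    rw [show k + 2 + 2 = k + 4 from by omega, show k + 2 + 1 = k + 3 from by omega]
    rw [fibo_eq, fibo_eq, fibo_eq]
    rw [show k+4-1 = k+3 from by omega, show k+4-2 = k+2 from by omega,
      show k+3-1 = k+2 from by omega, show k+3-2 = k+1 from by omega,
      show k+2-1 = k+1 from by omega, show k+2-2 = k from by omega]
    simp only [mul_one]
    have r2 := bF_mul_rec Xv Yv s k hs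
    have r3 : bF Xv Yv (s*(k+3)) =
        bL Xv Yv s * bF Xv Yv (s*(k+2)) - (-Yv)^s * bF Xv Yv (s*(k+1)) := by
      have := bF_mul_rec Xv Yv s (k+1) hs
      rwa [show k+1+2 = k+3 from by omega, show k+1+1 = k+2 from by omega] at this
    have r4 : bF Xv Yv (s*(k+4)) =
        bL Xv Yv s * bF Xv Yv (s*(k+3)) - (-Yv)^s * bF Xv Yv (s*(k+2)) := by
      have := bF_mul_rec Xv Yv s (k+2) hs
      rwa [show k+2+2 = k+4 from by omega, show k+2+1 = k+3 from by omega] at this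
    rw [hq]
    have hD : bF Xv Yv s * bF Xv Yv (s*2) * bF Xv Yv (s*3) ≠ 0 :=
      mul_ne_zero (mul_ne_zero hA hB) hC
    simp only [← mul_div_assoc]
    rw [← add_div, ← add_div]
    simp only [← mul_div_assoc]
    rw [eq_div_iff hD]
    rw [r4, r3, r2, d3, d2]
    ring
end
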